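/- Fix a real x > 0. For y > 0 let ρ(y) ∈ (0, 1) denote the unique solution of (1 + x/ρ)^ρ = 1 + x/(1 + y). Then ρ(y) tends to 0 as y tends to infinity; that is, for every ε with 0 < ε < 1 there exists Y such that for all y > Y, ρ(y) < ε. -/
import Mathlib


/-- Claim 4: for fixed `x > 0`, the unique solution `ρ(y) ∈ (0,1)` of
`(1 + x/ρ)^ρ = 1 + x/(1+y)` tends to `0` as `y → ∞`. -/
theorem rho_tendsto_zero (x : ℝ) (hx : 0 < x) (ρ : ℝ → ℝ)
    (hρ : ∀ y : ℝ, 0 < y →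
      ρ y ∈ Set.Ioo (0 : ℝ) 1 ∧ (1 + x / ρ y) ^ ρ y = 1 + x / (1 + y)) :
    ∀ ε : ℝ, 0 < ε → ε < 1 → ∃ Y : ℝ, ∀ y : ℝ, Y < y → ρ y < ε := by
  intro ε hε hε1
  set c : ℝ := (1 + x) ^ ε with hc
  have hbase : 1 < 1 + x := by linarith
  have hc1 : 1 < c := Real.one_lt_rpow_iff_of_pos (by linarith) |>.2 (Or.inl ⟨hbase, hε⟩)
  refine ⟨max 0 (x / (c - 1)), fun y hy => ?_⟩
  have hy0 : 0 < y := lt_of_le_of_lt (le_max_left _ _) hy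
  obtain ⟨⟨hρ0, hρ1⟩, heq⟩ := hρ y hy0
  by_contra h
  push_neg at h
  -- RHS < c
  have h1y : x / (c - 1) < y := lt_of_le_of_lt (le_max_right _ _) hy
  have hrhs : 1 + x / (1 + y) < c := by
    have : x / (1 + y) < c - 1 := by
      have hxy : x < y * (c - 1) :=
        (div_lt_iff₀ (by linarith : (0:ℝ) < c - 1)).1 h1y
      rw [div_lt_iff₀ (by linarith)]
      nlinarith
    linarith
  -- LHS ≥ c
  have hxρ : x ≤ x / ρ y := by
    rw [le_div_iff₀ hρ0]; nlinarith
  have hlhs : c ≤ (1 + x / ρ y) ^ ρ y := by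
    calc c = (1 + x) ^ ε := rfl
      _ ≤ (1 + x) ^ ρ y := Real.rpow_le_rpow_of_exponent_le (le_of_lt hbase) h
      _ ≤ (1 + x / ρ y) ^ ρ y :=
          Real.rpow_le_rpow (by linarith) (by linarith) (le_of_lt hρ0)
  rw [heq] at hlhs
  linarith
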